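/- There exists a constant C > 0 such that for every function θ ∈ L²(ℝ) with weak derivative θ' ∈ L²(ℝ) and θ(0) = 0, one has (∫_ℝ |θ(t)|²/|t| dt)^{1/2} ≤ C ‖θ‖_{L²}^{1/2} ‖θ'‖_{L²}^{1/2}. -/

import Mathlib

open MeasureTheory Real

/-- There exists `C > 0` such that for every `θ ∈ L²(ℝ)` with weak derivative
`θ' ∈ L²(ℝ)` (encoded by `θ x = ∫ s in 0..x, θ' s`, which also gives `θ 0 = 0`),
one has `‖θ‖_{L²(dt/|t|)} ≤ C ‖θ‖_{L²}^{1/2} ‖θ'‖_{L²}^{1/2}`. -/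
theorem weighted_L2_interpolation_bound :
    ∃ C : ℝ, 0 < C ∧ ∀ (θ θ' : ℝ → ℂ),
      MemLp θ 2 volume → MemLp θ' 2 volume →
      (∀ x : ℝ, θ x = ∫ s in (0:ℝ)..x, θ' s) → θ 0 = 0 →
      (∫ t : ℝ, ‖θ t‖ ^ 2 / |t|) ^ ((1:ℝ)/2) ≤
        C * (∫ t : ℝ, ‖θ t‖ ^ 2) ^ ((1:ℝ)/4) * (∫ t : ℝ, ‖θ' t‖ ^ 2) ^ ((1:ℝ)/4) := by
  refine ⟨2, by norm_num, ?_⟩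
  intro θ θ' hθ hθ' hrep hθ0
  set A := ∫ t : ℝ, ‖θ t‖ ^ 2 with hA_def
  set B := ∫ t : ℝ, ‖θ' t‖ ^ 2 with hB_def
  have hθ2 : Integrable (fun t => ‖θ t‖ ^ 2) volume := by
    have := hθ.integrable_norm_rpow (by norm_num) (by norm_num)
    simpa [ENNReal.toReal_ofNat, Real.rpow_natCast] using this
  have hθ'2 : Integrable (fun t => ‖θ' t‖ ^ 2) volume := by
    have := hθ'.integrable_norm_rpow (by norm_num) (by norm_num)
    simpa [ENNReal.toReal_ofNat, Real.rpow_natCast] using this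
  have hA0 : 0 ≤ A := integral_nonneg fun t => by positivity
  have hB0 : 0 ≤ B := integral_nonneg fun t => by positivity
  by_cases hB : B = 0
  · -- θ' vanishes a.e., hence θ ≡ 0
    have hz : (fun t => ‖θ' t‖ ^ 2) =ᵐ[volume] 0 :=
      (integral_eq_zero_iff_of_nonneg (fun t => by positivity) hθ'2).mp hB
    have hz' : θ' =ᵐ[volume] 0 := by
      filter_upwards [hz] with t ht
      simp only [Pi.zero_apply] at ht ⊢
      have : ‖θ' t‖ = 0 := pow_eq_zero_iff (two_ne_zero) |>.mp ht
      simpa using this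
    have hθzero : ∀ x : ℝ, θ x = 0 := by
      intro x
      rw [hrep x]
      rw [intervalIntegral.integral_congr_ae (g := fun _ => (0:ℂ)) ?_]
      · simp
      · filter_upwards [hz'] with s hs _; exact hs
    have hL : (∫ t : ℝ, ‖θ t‖ ^ 2 / |t|) = 0 := by
      simp [hθzero]
    rw [hL, hB, Real.zero_rpow (by norm_num), Real.zero_rpow (by norm_num), mul_zero]
  by_cases hA : A = 0
  · have hz : (fun t => ‖θ t‖ ^ 2) =ᵐ[volume] 0 :=
      (integral_eq_zero_iff_of_nonneg (fun t => by positivity) hθ2).mp hA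
    have hL : (∫ t : ℝ, ‖θ t‖ ^ 2 / |t|) = 0 := by
      apply integral_eq_zero_of_ae
      filter_upwards [hz] with t ht
      simp only [Pi.zero_apply] at ht ⊢
      rw [ht, zero_div]
    rw [hL, hA, Real.zero_rpow (by norm_num), Real.zero_rpow (by norm_num), mul_zero, zero_mul]
  have hA0' : 0 < A := lt_of_le_of_ne hA0 (Ne.symm hA)
  have hB0' : 0 < B := lt_of_le_of_ne hB0 (Ne.symm hB)
  -- pointwise Cauchy–Schwarz bound
  have hpt : ∀ x : ℝ, ‖θ x‖ ^ 2 ≤ |x| * B := by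
    intro x
    set S : Set ℝ := Set.uIoc (0:ℝ) x with hS_def
    have hSmeas : volume S = ENNReal.ofReal |x| := by
      rw [hS_def, Set.uIoc, Real.volume_Ioc]
      congr 1
      rcases le_total 0 x with h | h
      · simp [min_eq_left h, max_eq_right h, abs_of_nonneg h]
      · simp [min_eq_right h, max_eq_left h, abs_of_nonpos h]
    haveI : IsFiniteMeasure (volume.restrict S) := by
      constructor
      rw [Measure.restrict_apply_univ, hSmeas]
      exact ENNReal.ofReal_lt_top
    have h1 : ‖θ x‖ ≤ ∫ s in S, ‖θ' s‖ := by
      rw [hrep x]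
      exact intervalIntegral.norm_integral_le_integral_norm_uIoc
    have hconj : Real.HolderConjugate 2 2 := by
      rw [Real.holderConjugate_iff]; norm_num
    have hmem1 : MemLp (fun s => ‖θ' s‖) (ENNReal.ofReal 2) (volume.restrict S) := by
      have := (hθ'.norm).restrict (μ := volume) S
      simpa [ENNReal.ofReal_ofNat] using this
    have hmem2 : MemLp (fun _ : ℝ => (1:ℝ)) (ENNReal.ofReal 2) (volume.restrict S) :=
      memLp_const 1
    have h2 := integral_mul_le_Lp_mul_Lq_of_nonneg hconj
      (Filter.Eventually.of_forall fun s => norm_nonneg (θ' s))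
      (Filter.Eventually.of_forall fun _ => zero_le_one) hmem1 hmem2
    simp only [mul_one, one_rpow] at h2
    have hIS : ∫ s in S, ‖θ' s‖ ^ (2:ℝ) ≤ B := by
      have : ∫ s in S, ‖θ' s‖ ^ (2:ℝ) = ∫ s in S, ‖θ' s‖ ^ 2 := by
        apply integral_congr_ae
        filter_upwards with s
        rw [show (2:ℝ) = ((2:ℕ):ℝ) by norm_num, Real.rpow_natCast]
      rw [this]
      exact setIntegral_le_integral hθ'2 (Filter.Eventually.of_forall fun t => by positivity)
    have hone : ∫ _ in S, (1:ℝ) = |x| := by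
      rw [setIntegral_const, smul_eq_mul, mul_one, measureReal_def, hSmeas, ENNReal.toReal_ofReal (abs_nonneg x)]
    rw [hone] at h2
    have hISnn : 0 ≤ ∫ s in S, ‖θ' s‖ ^ (2:ℝ) :=
      integral_nonneg fun s => Real.rpow_nonneg (norm_nonneg _) _
    have hchain : ‖θ x‖ ≤ B ^ ((1:ℝ)/2) * |x| ^ ((1:ℝ)/2) := by
      refine (h1.trans h2).trans ?_
      gcongr
    calc ‖θ x‖ ^ 2 ≤ (B ^ ((1:ℝ)/2) * |x| ^ ((1:ℝ)/2)) ^ 2 := by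
          apply pow_le_pow_left₀ (norm_nonneg _) hchain
      _ = |x| * B := by
          rw [mul_pow, ← Real.rpow_natCast (B ^ ((1:ℝ)/2)) 2, ← Real.rpow_natCast (|x| ^ ((1:ℝ)/2)) 2,
            ← Real.rpow_mul hB0, ← Real.rpow_mul (abs_nonneg x)]
          norm_num [mul_comm]
  -- split at R
  set sA := Real.sqrt A with hsA_def
  set sB := Real.sqrt B with hsB_def
  have hsA0 : 0 < sA := Real.sqrt_pos.mpr hA0'
  have hsB0 : 0 < sB := Real.sqrt_pos.mpr hB0'
  set R := sA / sB with hR_def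
  have hR0 : 0 < R := div_pos hsA0 hsB0
  set g : ℝ → ℝ := fun t => Set.indicator (Set.Icc (-R) R) (fun _ => B) t + ‖θ t‖ ^ 2 / R
    with hg_def
  have hg_int : Integrable g volume := by
    apply Integrable.add
    · exact ((integrableOn_const measure_Icc_lt_top.ne).integrable_indicator measurableSet_Icc)
    · exact hθ2.div_const R
  have hle : ∀ t : ℝ, ‖θ t‖ ^ 2 / |t| ≤ g t := by
    intro t
    rcases le_or_gt |t| R with h | h
    · have hind : Set.indicator (Set.Icc (-R) R) (fun _ => B) t = B := by
        rw [Set.indicator_of_mem]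
        exact abs_le.mp h
      have h1 : ‖θ t‖ ^ 2 / |t| ≤ B := by
        rcases eq_or_ne t 0 with rfl | ht
        · simp [hθ0, hB0]
        · rw [div_le_iff₀ (abs_pos.mpr ht)]
          calc ‖θ t‖ ^ 2 ≤ |t| * B := hpt t
            _ = B * |t| := mul_comm _ _
      rw [hg_def]
      simp only [hind]
      have : 0 ≤ ‖θ t‖ ^ 2 / R := by positivity
      linarith
    · have h1 : ‖θ t‖ ^ 2 / |t| ≤ ‖θ t‖ ^ 2 / R :=
        div_le_div_of_nonneg_left (by positivity) hR0 h.le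
      rw [hg_def]
      have : 0 ≤ Set.indicator (Set.Icc (-R) R) (fun _ => B) t :=
        Set.indicator_nonneg (fun _ _ => hB0) t
      simp only
      linarith
  have hgint_val : ∫ t, g t = 2 * R * B + A / R := by
    rw [hg_def]
    rw [integral_add (((integrableOn_const measure_Icc_lt_top.ne).integrable_indicator measurableSet_Icc)) (hθ2.div_const R)]
    congr 1
    · rw [integral_indicator measurableSet_Icc, setIntegral_const, smul_eq_mul,
        Real.volume_real_Icc_of_le (by linarith)]
      ring
    · rw [integral_div]
  have hmain : (∫ t : ℝ, ‖θ t‖ ^ 2 / |t|) ≤ 3 * sA * sB := by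
    have h1 : (∫ t : ℝ, ‖θ t‖ ^ 2 / |t|) ≤ ∫ t, g t :=
      integral_mono_of_nonneg (Filter.Eventually.of_forall fun t => by positivity) hg_int
        (Filter.Eventually.of_forall hle)
    rw [hgint_val] at h1
    have hAe : A = sA * sA := (Real.mul_self_sqrt hA0).symm
    have hBe : B = sB * sB := (Real.mul_self_sqrt hB0).symm
    have : 2 * R * B + A / R = 3 * sA * sB := by
      rw [hR_def, hAe, hBe]
      field_simp
      ring
    linarith [this ▸ h1]
  -- conclude
  have hInn : 0 ≤ ∫ t : ℝ, ‖θ t‖ ^ 2 / |t| := integral_nonneg fun t => by positivity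
  have step1 : (∫ t : ℝ, ‖θ t‖ ^ 2 / |t|) ^ ((1:ℝ)/2) ≤ (3 * sA * sB) ^ ((1:ℝ)/2) :=
    Real.rpow_le_rpow hInn hmain (by norm_num)
  have step2 : (3 * sA * sB) ^ ((1:ℝ)/2) = 3 ^ ((1:ℝ)/2) * A ^ ((1:ℝ)/4) * B ^ ((1:ℝ)/4) := by
    rw [Real.mul_rpow (by positivity) hsB0.le, Real.mul_rpow (by norm_num) hsA0.le]
    congr 1
    · congr 1
      rw [hsA_def, Real.sqrt_eq_rpow, ← Real.rpow_mul hA0]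
      norm_num
    · rw [hsB_def, Real.sqrt_eq_rpow, ← Real.rpow_mul hB0]
      norm_num
  have h3 : (3:ℝ) ^ ((1:ℝ)/2) ≤ 2 := by
    rw [← Real.sqrt_eq_rpow]
    rw [show (2:ℝ) = Real.sqrt 4 by
      rw [show (4:ℝ) = 2 ^ 2 by norm_num, Real.sqrt_sq (by norm_num : (0:ℝ) ≤ 2)]]
    exact Real.sqrt_le_sqrt (by norm_num)
  have step3 : (3:ℝ) ^ ((1:ℝ)/2) * A ^ ((1:ℝ)/4) * B ^ ((1:ℝ)/4) ≤
      2 * A ^ ((1:ℝ)/4) * B ^ ((1:ℝ)/4) :=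
    mul_le_mul_of_nonneg_right
      (mul_le_mul_of_nonneg_right h3 (Real.rpow_nonneg hA0 _))
      (Real.rpow_nonneg hB0 _)
  exact (step1.trans_eq step2).trans step3
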